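/- arXiv:1405.0666 — 9 statements merged into one kernel-verified Lean document; each statement's English description precedes it below -/
import Mathlib

section
/- Let γ > 1, 0 ≤ b̃ < 1 and 1 < β < (γ+1)/(γ−1+2b̃). Define h₀ = −(1 − b̃β)²(β − 1)²/β, h₁ = (1 − b̃β)²(β − 1)(3 − 1/β) − 2(β − 1)(1 − b̃β)((γ+1−2b̃)β − (γ−1)), h₂ = −((3β − 2)(1 − b̃β)² + (β − 1)((γ+1−2b̃)β − (γ−1))(γ−1+2b̃β)), and h₃ = β(1 − b̃β)². Then h₀ < 0, h₁ < 0, h₂ < 0 and h₃ > 0. -/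
/-- Signs of the coefficients of the cubic `F̃(β, X) = h₀ + h₁X + h₂X² + h₃X³`
governing regular reflection in a van der Waals gas. -/
theorem cubic_coefficient_signs
    (γ bt β : ℝ)
    (hγ : 1 < γ) (hbt0 : 0 ≤ bt) (hbt1 : bt < 1)
    (hβ : 1 < β) (hβup : β < (γ + 1) / (γ - 1 + 2 * bt)) :
    (-(1 - bt * β) ^ 2 * (β - 1) ^ 2 / β < 0) ∧
    ((1 - bt * β) ^ 2 * (β - 1) * (3 - 1 / β)
      - 2 * (β - 1) * (1 - bt * β) * ((γ + 1 - 2 * bt) * β - (γ - 1)) < 0) ∧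
    (-((3 * β - 2) * (1 - bt * β) ^ 2
      + (β - 1) * ((γ + 1 - 2 * bt) * β - (γ - 1)) * (γ - 1 + 2 * bt * β)) < 0) ∧
    (0 < β * (1 - bt * β) ^ 2) := by
  have hd : 0 < γ - 1 + 2 * bt := by nlinarith
  have hmul : β * (γ - 1 + 2 * bt) < γ + 1 := by
    have := (lt_div_iff₀ hd).mp hβup
    linarith
  have hbtβ : bt * β < 1 := by nlinarith
  have hβ0 : 0 < β := by linarith
  have hpos : 0 < (γ + 1 - 2 * bt) * β - (γ - 1) := by nlinarith
  refine ⟨?_, ?_, ?_, ?_⟩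
  · have h1 : 0 < (1 - bt * β) ^ 2 := pow_pos (by linarith) 2
    have h2 : 0 < (β - 1) ^ 2 := pow_pos (by linarith) 2
    have h3 : 0 < (1 - bt * β) ^ 2 * (β - 1) ^ 2 / β := div_pos (mul_pos h1 h2) hβ0
    have heq : -(1 - bt * β) ^ 2 * (β - 1) ^ 2 / β
        = -((1 - bt * β) ^ 2 * (β - 1) ^ 2 / β) := by ring
    rw [heq]; linarith
  · have hinv : 1 / β < 1 := by
      rw [div_lt_one hβ0]; exact hβ
    have hβinv : β * (1 / β) = 1 := mul_one_div_cancel (by positivity)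
    have key : (1 - bt * β) * (3 - 1 / β) - 2 * ((γ + 1 - 2 * bt) * β - (γ - 1)) < 0 := by
      nlinarith [mul_pos hβ0 hpos, sq_nonneg (β - 1), mul_nonneg hbt0 hβ0.le,
        mul_nonneg (mul_nonneg hbt0 hβ0.le) (sub_nonneg.mpr hβ.le)]
    have hfac : 0 < (β - 1) * (1 - bt * β) := by nlinarith
    nlinarith [mul_pos hfac (neg_pos.mpr key)]
  · nlinarith [sq_nonneg (1 - bt * β), mul_pos (mul_pos (sub_pos.mpr hβ) hpos) (by nlinarith : (0:ℝ) < γ - 1 + 2 * bt * β)]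
  · exact mul_pos hβ0 (pow_pos (by linarith) 2)
end

section
/- Let γ > 1, 0 ≤ b̃ < 1 and 1 < β < (γ+1)/(γ−1+2b̃). Define F(β, s) = s(1 + β²s)²(1 − b̃β)² − (β − 1)(1 + βs)((γ+1−2b̃)β − (γ−1))((γ−1+2b̃β)βs + (γ+1)) for s ≥ 0. Then there exists a critical angle φ* ∈ (0, π/2), depending on β, b̃ and γ, such that for every φ ∈ (0, π/2): F(β, tan²φ) ≥ 0 if and only if φ ≥ φ*. Equivalently, there exists J = J(β, b̃, γ) > 0 such that F(β, tan²φ) ≥ 0 if and only if tan²φ ≥ J. -/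
open Real

/-- Key monotonicity inequality: the function
`s ↦ s (1+β²s)² / ((1+βs)(Ds+E))` is monotone on `[0,∞)` when `β ≥ 1`,
`D, E ≥ 0`, stated in cross-multiplied form. -/
lemma rr_mono_key (β D E u s : ℝ) (hβ : 1 ≤ β) (hD : 0 ≤ D) (hE : 0 ≤ E)
    (hu : 0 ≤ u) (hus : u ≤ s) :
    u * (1 + β ^ 2 * u) ^ 2 * ((1 + β * s) * (D * s + E))
      ≤ s * (1 + β ^ 2 * s) ^ 2 * ((1 + β * u) * (D * u + E)) := by
  have hs : 0 ≤ s := hu.trans hus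
  have hsu : 0 ≤ s - u := by linarith
  have hb0 : 0 ≤ β := by linarith
  have h2 : 0 ≤ 2 * β - 1 := by linarith
  have hu2 : 0 ≤ u^2 := sq_nonneg u
  have hs2 : 0 ≤ s^2 := sq_nonneg s
  have hb2 : 0 ≤ β^2 := sq_nonneg β
  have hb3 : 0 ≤ β^3 := pow_nonneg hb0 3
  have hb4 : 0 ≤ β^4 := pow_nonneg hb0 4
  have hb5 : 0 ≤ β^5 := pow_nonneg hb0 5
  have htwo : (0:ℝ) ≤ 2 := by norm_num
  have m1 : 0 ≤ 2*E*s*β^2 := mul_nonneg (mul_nonneg (mul_nonneg htwo hE) hs) hb2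
  have m2 : 0 ≤ E*s^2*β^4 := mul_nonneg (mul_nonneg hE hs2) hb4
  have m3 : 0 ≤ 2*E*u*β^2 := mul_nonneg (mul_nonneg (mul_nonneg htwo hE) hu) hb2
  have m4 : 0 ≤ 2*E*u*s*β^3 :=
    mul_nonneg (mul_nonneg (mul_nonneg (mul_nonneg htwo hE) hu) hs) hb3
  have m5 : 0 ≤ E*u*s*β^4 := mul_nonneg (mul_nonneg (mul_nonneg hE hu) hs) hb4
  have m6 : 0 ≤ E*u*s^2*β^5 := mul_nonneg (mul_nonneg (mul_nonneg hE hu) hs2) hb5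
  have m7 : 0 ≤ E*u^2*β^4 := mul_nonneg (mul_nonneg hE hu2) hb4
  have m8 : 0 ≤ E*u^2*s*β^5 := mul_nonneg (mul_nonneg (mul_nonneg hE hu2) hs) hb5
  have m9 : 0 ≤ D*u*s*β*(2*β-1) :=
    mul_nonneg (mul_nonneg (mul_nonneg (mul_nonneg hD hu) hs) hb0) h2
  have m10 : 0 ≤ D*u*s^2*β^4 := mul_nonneg (mul_nonneg (mul_nonneg hD hu) hs2) hb4
  have m11 : 0 ≤ D*u^2*s*β^4 := mul_nonneg (mul_nonneg (mul_nonneg hD hu2) hs) hb4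
  have m12 : 0 ≤ D*u^2*s^2*β^5 := mul_nonneg (mul_nonneg (mul_nonneg hD hu2) hs2) hb5
  have hQ : 0 ≤ E + 2*E*s*β^2 + E*s^2*β^4 + 2*E*u*β^2 + 2*E*u*s*β^3 + E*u*s*β^4
      + E*u*s^2*β^5 + E*u^2*β^4 + E*u^2*s*β^5 + D*u*s*β*(2*β-1) + D*u*s^2*β^4
      + D*u^2*s*β^4 + D*u^2*s^2*β^5 := by linarith
  have hfac : s * (1 + β ^ 2 * s) ^ 2 * ((1 + β * u) * (D * u + E))
      - u * (1 + β ^ 2 * u) ^ 2 * ((1 + β * s) * (D * s + E))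
      = (s - u) * (E + 2*E*s*β^2 + E*s^2*β^4 + 2*E*u*β^2 + 2*E*u*s*β^3 + E*u*s*β^4
      + E*u*s^2*β^5 + E*u^2*β^4 + E*u^2*s*β^5 + D*u*s*β*(2*β-1) + D*u*s^2*β^4
      + D*u^2*s*β^4 + D*u^2*s^2*β^5) := by ring
  linarith [mul_nonneg hsu hQ]

/-- Core result: there is a critical value `J > 0` of `s = tan² φ` such that
`F s ≥ 0` iff `s ≥ J`, for positive `s`. -/
lemma rr_exists_J (γ bt β : ℝ) (F : ℝ → ℝ)
    (hγ : 1 < γ) (hbt0 : 0 ≤ bt) (hbt1 : bt < 1)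
    (hβ : 1 < β) (hβup : β < (γ + 1) / (γ - 1 + 2 * bt))
    (hF : ∀ s : ℝ, F s
      = s * (1 + β ^ 2 * s) ^ 2 * (1 - bt * β) ^ 2
        - (β - 1) * (1 + β * s) * ((γ + 1 - 2 * bt) * β - (γ - 1))
          * ((γ - 1 + 2 * bt * β) * β * s + (γ + 1))) :
    ∃ J : ℝ, 0 < J ∧ ∀ s : ℝ, 0 < s → (0 ≤ F s ↔ J ≤ s) := by
  have hden : (0:ℝ) < γ - 1 + 2 * bt := by linarith
  have hup : β * (γ - 1 + 2 * bt) < γ + 1 := by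
    have := (lt_div_iff₀ hden).mp hβup; linarith
  obtain ⟨A, hAdef⟩ : ∃ x : ℝ, x = 1 - bt * β := ⟨_, rfl⟩
  obtain ⟨C, hCdef⟩ : ∃ x : ℝ, x = (γ + 1 - 2 * bt) * β - (γ - 1) := ⟨_, rfl⟩
  obtain ⟨D, hDdef⟩ : ∃ x : ℝ, x = (γ - 1 + 2 * bt * β) * β := ⟨_, rfl⟩
  obtain ⟨E, hEdef⟩ : ∃ x : ℝ, x = γ + 1 := ⟨_, rfl⟩
  obtain ⟨K, hKdef⟩ : ∃ x : ℝ, x = (β - 1) * C := ⟨_, rfl⟩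
  have hbb : 0 ≤ bt * β := mul_nonneg hbt0 (by linarith)
  have hA : 0 < A := by
    rw [hAdef]
    rcases eq_or_lt_of_le hbt0 with h | h
    · simp [← h]
    · have h1 : bt * (β * (γ - 1 + 2 * bt)) < bt * (γ + 1) :=
        mul_lt_mul_of_pos_left hup h
      nlinarith [mul_nonneg hbt0 (by linarith : (0:ℝ) ≤ γ - 1)]
  have hC : 0 < C := by rw [hCdef]; nlinarith
  have hD : 0 < D := by rw [hDdef]; nlinarith
  have hE : 0 < E := by rw [hEdef]; linarith
  have hK : 0 < K := by rw [hKdef]; exact mul_pos (by linarith) hC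
  have hF' : ∀ s : ℝ, F s = s * (1 + β ^ 2 * s) ^ 2 * A ^ 2
      - K * ((1 + β * s) * (D * s + E)) := by
    intro s; rw [hF s, hAdef, hKdef, hCdef, hDdef, hEdef]; ring
  have hP : ∀ s : ℝ, 0 ≤ s → 0 < (1 + β * s) * (D * s + E) := by
    intro s hs
    have h1 : 0 < 1 + β * s := by nlinarith
    have h2 : 0 < D * s + E := by nlinarith [mul_nonneg hD.le hs]
    exact mul_pos h1 h2
  -- upward closedness
  have up : ∀ u s : ℝ, 0 ≤ u → u ≤ s → 0 ≤ F u → 0 ≤ F s := by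
    intro u s hu hus hFu
    have hs : 0 ≤ s := hu.trans hus
    have hPu := hP u hu
    have hPs := hP s hs
    have h1 : K * ((1 + β * u) * (D * u + E)) ≤ u * (1 + β ^ 2 * u) ^ 2 * A ^ 2 := by
      rw [hF' u] at hFu; linarith
    have h2 := rr_mono_key β D E u s hβ.le hD.le hE.le hu hus
    rw [hF' s]
    have h3 : K * ((1 + β * s) * (D * s + E)) * ((1 + β * u) * (D * u + E))
        ≤ s * (1 + β ^ 2 * s) ^ 2 * A ^ 2 * ((1 + β * u) * (D * u + E)) := by
      calc K * ((1 + β * s) * (D * s + E)) * ((1 + β * u) * (D * u + E))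
          = K * ((1 + β * u) * (D * u + E)) * ((1 + β * s) * (D * s + E)) := by ring
        _ ≤ u * (1 + β ^ 2 * u) ^ 2 * A ^ 2 * ((1 + β * s) * (D * s + E)) :=
            mul_le_mul_of_nonneg_right h1 hPs.le
        _ = A ^ 2 * (u * (1 + β ^ 2 * u) ^ 2 * ((1 + β * s) * (D * s + E))) := by ring
        _ ≤ A ^ 2 * (s * (1 + β ^ 2 * s) ^ 2 * ((1 + β * u) * (D * u + E))) :=
            mul_le_mul_of_nonneg_left h2 (sq_nonneg A)
        _ = s * (1 + β ^ 2 * s) ^ 2 * A ^ 2 * ((1 + β * u) * (D * u + E)) := by ring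
    have := le_of_mul_le_mul_right h3 hPu
    linarith
  -- continuity of F
  have hFcont : Continuous F := by
    have : F = fun s => s * (1 + β ^ 2 * s) ^ 2 * A ^ 2
        - K * ((1 + β * s) * (D * s + E)) := funext hF'
    rw [this]; fun_prop
  -- nonemptiness: a large s with F s ≥ 0
  obtain ⟨s0, hs0def⟩ : ∃ x : ℝ, x = max 1 (K * (1 + β) * (D + E) / A ^ 2) := ⟨_, rfl⟩
  have hs01 : 1 ≤ s0 := by rw [hs0def]; exact le_max_left _ _
  have hs00 : 0 ≤ s0 := by linarith
  have hA2 : 0 < A ^ 2 := pow_pos hA 2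
  have hs02 : K * (1 + β) * (D + E) ≤ A ^ 2 * s0 := by
    have h : K * (1 + β) * (D + E) / A ^ 2 ≤ s0 := by
      rw [hs0def]; exact le_max_right _ _
    calc K * (1 + β) * (D + E) = K * (1 + β) * (D + E) / A ^ 2 * A ^ 2 := by
          field_simp
      _ ≤ s0 * A ^ 2 := mul_le_mul_of_nonneg_right h hA2.le
      _ = A ^ 2 * s0 := by ring
  have hFs0 : 0 ≤ F s0 := by
    rw [hF' s0]
    have hb1 : 1 ≤ β ^ 2 := by nlinarith
    have hbs : s0 ≤ 1 + β ^ 2 * s0 := by nlinarith [mul_le_mul_of_nonneg_right hb1 hs00]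
    have e3 : s0 ^ 2 ≤ (1 + β ^ 2 * s0) ^ 2 := by
      apply pow_le_pow_left₀ hs00 hbs
    have e1 : (1 + β * s0) ≤ (1 + β) * s0 := by nlinarith
    have e2 : (D * s0 + E) ≤ (D + E) * s0 := by
      have h4 : E * 1 ≤ E * s0 := mul_le_mul_of_nonneg_left hs01 hE.le
      nlinarith
    have key : K * ((1 + β * s0) * (D * s0 + E)) ≤ s0 * (1 + β ^ 2 * s0) ^ 2 * A ^ 2 := by
      calc K * ((1 + β * s0) * (D * s0 + E))
          ≤ K * (((1 + β) * s0) * ((D + E) * s0)) := by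
            apply mul_le_mul_of_nonneg_left _ hK.le
            apply mul_le_mul e1 e2 (add_nonneg (mul_nonneg hD.le hs00) hE.le)
              (mul_nonneg (by linarith) hs00)
        _ = K * (1 + β) * (D + E) * s0 ^ 2 := by ring
        _ ≤ A ^ 2 * s0 * s0 ^ 2 := mul_le_mul_of_nonneg_right hs02 (sq_nonneg s0)
        _ ≤ A ^ 2 * s0 * (1 + β ^ 2 * s0) ^ 2 :=
            mul_le_mul_of_nonneg_left e3 (mul_nonneg hA2.le hs00)
        _ = s0 * (1 + β ^ 2 * s0) ^ 2 * A ^ 2 := by ring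
    linarith
  -- the critical value
  have hSne : Set.Nonempty {s : ℝ | 0 ≤ s ∧ 0 ≤ F s} := ⟨s0, hs00, hFs0⟩
  have hSbdd : BddBelow {s : ℝ | 0 ≤ s ∧ 0 ≤ F s} := ⟨0, fun x hx => hx.1⟩
  have hSclosed : IsClosed {s : ℝ | 0 ≤ s ∧ 0 ≤ F s} := by
    have : {s : ℝ | 0 ≤ s ∧ 0 ≤ F s} = {s : ℝ | 0 ≤ s} ∩ {s : ℝ | 0 ≤ F s} := rfl
    rw [this]
    exact (isClosed_le continuous_const continuous_id).inter
      (isClosed_le continuous_const hFcont)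
  have hJmem : sInf {s : ℝ | 0 ≤ s ∧ 0 ≤ F s} ∈ {s : ℝ | 0 ≤ s ∧ 0 ≤ F s} :=
    hSclosed.csInf_mem hSne hSbdd
  obtain ⟨hJ1, hJ2⟩ := hJmem
  have hF0 : F 0 < 0 := by
    have h0 := hF' 0
    have h1 : (0:ℝ) * (1 + β ^ 2 * 0) ^ 2 * A ^ 2 = 0 := by ring
    have h2 := mul_pos hK (hP 0 le_rfl)
    rw [h0, h1]
    linarith
  have hJpos : 0 < sInf {s : ℝ | 0 ≤ s ∧ 0 ≤ F s} := by
    rcases eq_or_lt_of_le hJ1 with h | h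
    · exfalso; rw [← h] at hJ2; exact absurd hJ2 (not_le.mpr hF0)
    · exact h
  refine ⟨sInf {s : ℝ | 0 ≤ s ∧ 0 ≤ F s}, hJpos, fun s hs => ⟨fun h => ?_, fun h => ?_⟩⟩
  · exact csInf_le hSbdd ⟨hs.le, h⟩
  · exact up _ s hJ1 h hJ2

/-- Existence of a critical incidence angle `φ*` (equivalently a critical value `J`
of `tan²φ`) for the regular reflection condition `F(β, tan²φ) ≥ 0` in a
van der Waals gas. -/
theorem critical_angle_for_regular_reflection
    (γ bt β : ℝ) (F : ℝ → ℝ)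
    (hγ : 1 < γ) (hbt0 : 0 ≤ bt) (hbt1 : bt < 1)
    (hβ : 1 < β) (hβup : β < (γ + 1) / (γ - 1 + 2 * bt))
    (hF : ∀ s : ℝ, F s
      = s * (1 + β ^ 2 * s) ^ 2 * (1 - bt * β) ^ 2
        - (β - 1) * (1 + β * s) * ((γ + 1 - 2 * bt) * β - (γ - 1))
          * ((γ - 1 + 2 * bt * β) * β * s + (γ + 1))) :
    (∃ φstar ∈ Set.Ioo (0 : ℝ) (π / 2),
      ∀ φ ∈ Set.Ioo (0 : ℝ) (π / 2), (0 ≤ F (Real.tan φ ^ 2) ↔ φstar ≤ φ)) ∧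
    (∃ J : ℝ, 0 < J ∧
      ∀ φ ∈ Set.Ioo (0 : ℝ) (π / 2), (0 ≤ F (Real.tan φ ^ 2) ↔ J ≤ Real.tan φ ^ 2)) := by
  obtain ⟨J, hJpos, hJ⟩ := rr_exists_J γ bt β F hγ hbt0 hbt1 hβ hβup hF
  have htan : ∀ φ ∈ Set.Ioo (0 : ℝ) (π / 2), 0 < Real.tan φ := fun φ hφ =>
    Real.tan_pos_of_pos_of_lt_pi_div_two hφ.1 hφ.2
  constructor
  · refine ⟨Real.arctan (Real.sqrt J), ⟨?_, Real.arctan_lt_pi_div_two _⟩, fun φ hφ => ?_⟩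
    · have hs : 0 < Real.sqrt J := Real.sqrt_pos.mpr hJpos
      have := Real.arctan_strictMono hs
      rwa [Real.arctan_zero] at this
    · have htφ : 0 < Real.tan φ := htan φ hφ
      rw [hJ _ (pow_pos htφ 2)]
      constructor
      · intro h
        have h1 : Real.sqrt J ≤ Real.sqrt (Real.tan φ ^ 2) := Real.sqrt_le_sqrt h
        rw [Real.sqrt_sq htφ.le] at h1
        have h2 := Real.arctan_strictMono.monotone h1
        rwa [Real.arctan_tan (by linarith [hφ.1, Real.pi_pos] : -(π/2) < φ) hφ.2] at h2
      · intro h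
        have h1 : Real.sqrt J ≤ Real.tan φ := by
          have := Real.arctan_strictMono.monotone
          by_contra hc
          push_neg at hc
          have h2 := Real.arctan_strictMono hc
          rw [Real.arctan_tan (by linarith [hφ.1, Real.pi_pos] : -(π/2) < φ) hφ.2] at h2
          linarith
        calc J = Real.sqrt J ^ 2 := (Real.sq_sqrt hJpos.le).symm
          _ ≤ Real.tan φ ^ 2 := by nlinarith [Real.sqrt_nonneg J]
  · exact ⟨J, hJpos, fun φ hφ => hJ _ (pow_pos (htan φ hφ) 2)⟩
end

section
/- Let γ > 1, 0 ≤ b̃ < 1, 1 < β < (γ+1)/(γ−1+2b̃), and t > 0. Suppose F(β, t²) = t²(1 + β²t²)²(1 − b̃β)² − (β − 1)(1 + βt²)((γ+1−2b̃)β − (γ−1))((γ−1+2b̃β)βt² + (γ+1)) ≥ 0, and let T = [−t(1 + β²t²)(1 − b̃β) − sqrt(F(β, t²))] / ((1 + βt²)((γ+1−2b̃)β − (γ−1))) be the minus branch of tan φ_r. Then β_r := (γ+1)(1 + β²t²) / ((γ+1)β(1 + T²) + (γ−1+2b̃β)(β²t² − T²)) satisfies 1 < β_r < (γ+1)/(γ−1+2b̃β).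 -/
set_option maxHeartbeats 800000


/-- For the minus branch of `tan φ_r`, the reflected density ratio `β_r`
satisfies the entropy bounds `1 < β_r < (γ+1)/(γ-1+2b̃β)`. -/
theorem reflected_density_ratio_entropy_bounds
    (γ bt β t T Fval βr : ℝ)
    (hγ : 1 < γ) (hbt0 : 0 ≤ bt) (hbt1 : bt < 1)
    (hβ : 1 < β) (hβup : β < (γ + 1) / (γ - 1 + 2 * bt)) (ht : 0 < t)
    (hFval : Fval = t ^ 2 * (1 + β ^ 2 * t ^ 2) ^ 2 * (1 - bt * β) ^ 2
      - (β - 1) * (1 + β * t ^ 2) * ((γ + 1 - 2 * bt) * β - (γ - 1))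
        * ((γ - 1 + 2 * bt * β) * β * t ^ 2 + (γ + 1)))
    (hFnn : 0 ≤ Fval)
    (hT : T = (-t * (1 + β ^ 2 * t ^ 2) * (1 - bt * β) - Real.sqrt Fval)
      / ((1 + β * t ^ 2) * ((γ + 1 - 2 * bt) * β - (γ - 1))))
    (hβr : βr = (γ + 1) * (1 + β ^ 2 * t ^ 2)
      / ((γ + 1) * β * (1 + T ^ 2) + (γ - 1 + 2 * bt * β) * (β ^ 2 * t ^ 2 - T ^ 2))) :
    1 < βr ∧ βr < (γ + 1) / (γ - 1 + 2 * bt * β) := by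
  set s := Real.sqrt Fval with hsdef
  have hγ1 : (0:ℝ) < γ - 1 := by linarith
  have hdenpos : (0:ℝ) < γ - 1 + 2 * bt := by linarith
  have hbe : β * (γ - 1 + 2 * bt) < γ + 1 := (lt_div_iff₀ hdenpos).mp hβup
  have hbtβ : bt * β < 1 := by nlinarith [mul_pos hγ1 (sub_pos.2 hβ)]
  have h1mb : (0:ℝ) < 1 - bt * β := by linarith
  have he : (0:ℝ) < (γ + 1 - 2 * bt) * β - (γ - 1) := by nlinarith
  have hβ0 : (0:ℝ) < β := by linarith
  have hu : (0:ℝ) < 1 + β * t ^ 2 := by linarith [mul_nonneg hβ0.le (sq_nonneg t)]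
  have hb2t2 : (0:ℝ) < 1 + β ^ 2 * t ^ 2 := by positivity
  have ha : (0:ℝ) < t * (1 + β ^ 2 * t ^ 2) * (1 - bt * β) :=
    mul_pos (mul_pos ht hb2t2) h1mb
  have hs0 : 0 ≤ s := Real.sqrt_nonneg _
  have hs2 : s ^ 2 = Fval := Real.sq_sqrt hFnn
  -- positivity pieces for K
  have hA : (0:ℝ) < (γ + 1) * β - γ - bt * β := by
    nlinarith [mul_pos hγ1 (sub_pos.2 hβ)]
  have hB : (0:ℝ) < (γ + 1) * β ^ 2 - 2 * bt * β ^ 2 - (γ - 1) * β - 1 + bt * β := by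
    nlinarith [mul_pos h1mb (show (0:ℝ) < 2 * β - 1 by linarith),
      mul_pos (show (0:ℝ) < γ + 1 by linarith) (mul_pos (show (0:ℝ) < β by linarith) (sub_pos.2 hβ))]
  have hKin : (0:ℝ) < β * (1 + β * t ^ 2) * ((γ + 1 - 2 * bt) * β - (γ - 1))
      - (1 + β ^ 2 * t ^ 2) * (1 - bt * β) := by
    linarith [mul_nonneg (sq_nonneg (β * t)) hA.le, hB]
  have hK : (0:ℝ) < β * t * (1 + β * t ^ 2) * ((γ + 1 - 2 * bt) * β - (γ - 1))
      - t * (1 + β ^ 2 * t ^ 2) * (1 - bt * β) := by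
    linarith [mul_pos ht hKin]
  -- K² - F identity
  have hI1 : (β * t * (1 + β * t ^ 2) * ((γ + 1 - 2 * bt) * β - (γ - 1))
      - t * (1 + β ^ 2 * t ^ 2) * (1 - bt * β)) ^ 2 - Fval
      = (γ + 1) * (β - 1) * ((γ + 1 - 2 * bt) * β - (γ - 1))
        * (1 + β * t ^ 2) ^ 2 * (1 + β ^ 2 * t ^ 2) := by
    rw [hFval]; ring
  have hposI1 : (0:ℝ) < (γ + 1) * (β - 1) * ((γ + 1 - 2 * bt) * β - (γ - 1))
      * (1 + β * t ^ 2) ^ 2 * (1 + β ^ 2 * t ^ 2) := by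
    exact mul_pos (mul_pos (mul_pos (mul_pos (by linarith) (by linarith)) he) (pow_pos hu 2)) hb2t2
  have hsK : s < β * t * (1 + β * t ^ 2) * ((γ + 1 - 2 * bt) * β - (γ - 1))
      - t * (1 + β ^ 2 * t ^ 2) * (1 - bt * β) := by
    have hlt : s ^ 2 < (β * t * (1 + β * t ^ 2) * ((γ + 1 - 2 * bt) * β - (γ - 1))
        - t * (1 + β ^ 2 * t ^ 2) * (1 - bt * β)) ^ 2 := by linarith [hs2, hI1, hposI1]
    exact lt_of_pow_lt_pow_left₀ 2 hK.le hlt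
  -- T * (u*e) = -(a + s)
  have hTmul : T * ((1 + β * t ^ 2) * ((γ + 1 - 2 * bt) * β - (γ - 1)))
      = -(t * (1 + β ^ 2 * t ^ 2) * (1 - bt * β) + s) := by
    rw [hT]
    rw [div_mul_cancel₀ _ (mul_pos hu he).ne']
    ring
  -- (a+s)² < u²·e·R  where R = (γ+1)(1-β)+2(1-btβ)β²t²
  have hI2 : (t * (1 + β ^ 2 * t ^ 2) * (1 - bt * β)) ^ 2
      + 2 * (t * (1 + β ^ 2 * t ^ 2) * (1 - bt * β))
        * (β * t * (1 + β * t ^ 2) * ((γ + 1 - 2 * bt) * β - (γ - 1))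
          - t * (1 + β ^ 2 * t ^ 2) * (1 - bt * β)) + Fval
      = (1 + β * t ^ 2) ^ 2 * ((γ + 1 - 2 * bt) * β - (γ - 1))
        * ((γ + 1) * (1 - β) + 2 * (1 - bt * β) * β ^ 2 * t ^ 2) := by
    rw [hFval]; ring
  have h2 : (t * (1 + β ^ 2 * t ^ 2) * (1 - bt * β) + s) ^ 2
      < (1 + β * t ^ 2) ^ 2 * ((γ + 1 - 2 * bt) * β - (γ - 1))
        * ((γ + 1) * (1 - β) + 2 * (1 - bt * β) * β ^ 2 * t ^ 2) := by
    linarith [mul_pos ha (sub_pos.2 hsK), hs2, hI2]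
  have hc : (0:ℝ) < (1 + β * t ^ 2) ^ 2 * ((γ + 1 - 2 * bt) * β - (γ - 1)) :=
    mul_pos (pow_pos hu 2) he
  have hETR : ((γ + 1 - 2 * bt) * β - (γ - 1)) * T ^ 2
      < (γ + 1) * (1 - β) + 2 * (1 - bt * β) * β ^ 2 * t ^ 2 := by
    have h1 : (T * ((1 + β * t ^ 2) * ((γ + 1 - 2 * bt) * β - (γ - 1)))) ^ 2
        = (t * (1 + β ^ 2 * t ^ 2) * (1 - bt * β) + s) ^ 2 := by
      rw [hTmul]; ring
    have h3 : ((γ + 1 - 2 * bt) * β - (γ - 1)) * T ^ 2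
          * ((1 + β * t ^ 2) ^ 2 * ((γ + 1 - 2 * bt) * β - (γ - 1)))
        < ((γ + 1) * (1 - β) + 2 * (1 - bt * β) * β ^ 2 * t ^ 2)
          * ((1 + β * t ^ 2) ^ 2 * ((γ + 1 - 2 * bt) * β - (γ - 1))) := by
      linarith [h1, h2]
    exact lt_of_mul_lt_mul_right h3 hc.le
  -- denominator of βr is positive
  have hDen : (0:ℝ) < (γ + 1) * β * (1 + T ^ 2)
      + (γ - 1 + 2 * bt * β) * (β ^ 2 * t ^ 2 - T ^ 2) := by
    linarith [mul_nonneg he.le (sq_nonneg T),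
      mul_nonneg (mul_nonneg (show (0:ℝ) ≤ γ - 1 + 2 * bt * β by
          linarith [mul_nonneg hbt0 hβ0.le]) (sq_nonneg β)) (sq_nonneg t),
      mul_pos (show (0:ℝ) < γ + 1 by linarith) hβ0]
  have hden2 : (0:ℝ) < γ - 1 + 2 * bt * β := by linarith [mul_nonneg hbt0 hβ0.le]
  constructor
  · rw [hβr, lt_div_iff₀ hDen]
    linarith [hETR]
  · rw [hβr, div_lt_div_iff₀ hDen hden2]
    linarith [mul_nonneg (mul_nonneg (show (0:ℝ) ≤ γ + 1 by linarith) he.le) (sq_nonneg T),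
      mul_pos (mul_pos (show (0:ℝ) < γ + 1 by linarith) hγ1) (sub_pos.2 hβ),
      mul_pos (mul_pos (show (0:ℝ) < γ + 1 by linarith) hβ0) (sub_pos.2 hbt1)]
end

section
/- Let γ > 1 and 0 ≤ b̃ < 1, and define g(ε) = ln[((γ+1−2b̃)(1+ε) − (γ−1)) / ((γ+1) − (γ−1+2b̃)(1+ε))] + γ ln[(1 − b̃(1+ε)) / ((1+ε)(1 − b̃))] for ε in a neighborhood of 0. Then g(0) = 0, g′(0) = 0, g″(0) = 0, and g‴(0)/6 = γ(γ²−1)/(12(1 − b̃)³); that is, the entropy jump across a weak shock of strength ε in a van der Waals gas satisfies (S₁ − S₀)/c_v = (γ(γ²−1)/(12(1−b̃)³))ε³ + O(ε⁴) as ε → 0. -/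
open Filter Asymptotics

lemma vdw_analyticAt_log {x : ℝ} (hx : 0 < x) : AnalyticAt ℝ Real.log x := by
  have h1 : AnalyticAt ℝ (fun t : ℝ => (Complex.log (t : ℂ)).re) x := by
    have hc : AnalyticAt ℂ Complex.log (x : ℂ) :=
      analyticAt_clog (Complex.mem_slitPlane_iff.2 (Or.inl (by simpa using hx)))
    exact (Complex.reCLM.analyticAt _).comp
      ((hc.restrictScalars).comp (Complex.ofRealCLM.analyticAt x))
  refine h1.congr ?_
  have : ∀ᶠ t : ℝ in nhds x, 0 < t := eventually_gt_nhds hx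
  filter_upwards [this] with t ht
  exact (Complex.log_ofReal_re t)

lemma vdw_affine (a c x : ℝ) : HasDerivAt (fun t : ℝ => c + a * t) a x := by
  simpa using ((hasDerivAt_id x).const_mul a).const_add c

lemma vdw_hd_log (a c x : ℝ) (h : c + a * x ≠ 0) :
    HasDerivAt (fun t => Real.log (c + a * t)) (a / (c + a * x)) x :=
  (vdw_affine a c x).log h

lemma vdw_hd_inv (a c x : ℝ) (h : c + a * x ≠ 0) :
    HasDerivAt (fun t => a / (c + a * t)) (-(a ^ 2 / (c + a * x) ^ 2)) x := by
  have := (hasDerivAt_const x a).div (vdw_affine a c x) h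
  refine this.congr_deriv ?_
  field_simp
  ring

lemma vdw_hd_inv2 (a c x : ℝ) (h : c + a * x ≠ 0) :
    HasDerivAt (fun t => -(a ^ 2 / (c + a * t) ^ 2)) (2 * a ^ 3 / (c + a * x) ^ 3) x := by
  have hp : (c + a * x) ^ 2 ≠ 0 := pow_ne_zero 2 h
  have := ((hasDerivAt_const x (a ^ 2)).div ((vdw_affine a c x).pow 2) hp).neg
  refine this.congr_deriv ?_
  simp only [Pi.pow_apply]
  field_simp
  ring

lemma vdw_analyticAt_affine_log (a c : ℝ) (h : 0 < c) :
    AnalyticAt ℝ (fun x : ℝ => Real.log (c + a * x)) 0 := by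
  have haff : AnalyticAt ℝ (fun x : ℝ => c + a * x) 0 :=
    analyticAt_const.add (analyticAt_const.mul analyticAt_id)
  exact (vdw_analyticAt_log (by simpa using h)).comp haff

noncomputable def vdwH (γ bt : ℝ) : ℝ → ℝ := fun x =>
  Real.log (2 * (1 - bt) + (γ + 1 - 2 * bt) * x)
    - Real.log (2 * (1 - bt) + -(γ - 1 + 2 * bt) * x)
    + γ * Real.log ((1 - bt) + -bt * x)
    - γ * Real.log (1 + 1 * x)
    - γ * Real.log (1 - bt)

noncomputable def vdwH1 (γ bt : ℝ) : ℝ → ℝ := fun x =>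
  (γ + 1 - 2 * bt) / (2 * (1 - bt) + (γ + 1 - 2 * bt) * x)
    - -(γ - 1 + 2 * bt) / (2 * (1 - bt) + -(γ - 1 + 2 * bt) * x)
    + γ * (-bt / ((1 - bt) + -bt * x))
    - γ * (1 / (1 + 1 * x))

noncomputable def vdwH2 (γ bt : ℝ) : ℝ → ℝ := fun x =>
  -((γ + 1 - 2 * bt) ^ 2 / (2 * (1 - bt) + (γ + 1 - 2 * bt) * x) ^ 2)
    - -((-(γ - 1 + 2 * bt)) ^ 2 / (2 * (1 - bt) + -(γ - 1 + 2 * bt) * x) ^ 2)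
    + γ * -((-bt) ^ 2 / ((1 - bt) + -bt * x) ^ 2)
    - γ * -(1 ^ 2 / (1 + 1 * x) ^ 2)

noncomputable def vdwH3 (γ bt : ℝ) : ℝ → ℝ := fun x =>
  2 * (γ + 1 - 2 * bt) ^ 3 / (2 * (1 - bt) + (γ + 1 - 2 * bt) * x) ^ 3
    - 2 * (-(γ - 1 + 2 * bt)) ^ 3 / (2 * (1 - bt) + -(γ - 1 + 2 * bt) * x) ^ 3
    + γ * (2 * (-bt) ^ 3 / ((1 - bt) + -bt * x) ^ 3)
    - γ * (2 * 1 ^ 3 / (1 + 1 * x) ^ 3)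

lemma vdwH_hasDerivAt (γ bt x : ℝ)
    (hA : 2 * (1 - bt) + (γ + 1 - 2 * bt) * x ≠ 0)
    (hB : 2 * (1 - bt) + -(γ - 1 + 2 * bt) * x ≠ 0)
    (hC : (1 - bt) + -bt * x ≠ 0)
    (hE : 1 + 1 * x ≠ 0) :
    HasDerivAt (vdwH γ bt) (vdwH1 γ bt x) x :=
  ((((vdw_hd_log _ _ x hA).sub (vdw_hd_log _ _ x hB)).add
      ((vdw_hd_log _ _ x hC).const_mul γ)).sub
      ((vdw_hd_log 1 1 x hE).const_mul γ)).sub_const _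

lemma vdwH1_hasDerivAt (γ bt x : ℝ)
    (hA : 2 * (1 - bt) + (γ + 1 - 2 * bt) * x ≠ 0)
    (hB : 2 * (1 - bt) + -(γ - 1 + 2 * bt) * x ≠ 0)
    (hC : (1 - bt) + -bt * x ≠ 0)
    (hE : 1 + 1 * x ≠ 0) :
    HasDerivAt (vdwH1 γ bt) (vdwH2 γ bt x) x :=
  (((vdw_hd_inv _ _ x hA).sub (vdw_hd_inv _ _ x hB)).add
      ((vdw_hd_inv _ _ x hC).const_mul γ)).sub
      ((vdw_hd_inv 1 1 x hE).const_mul γ)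

lemma vdwH2_hasDerivAt (γ bt x : ℝ)
    (hA : 2 * (1 - bt) + (γ + 1 - 2 * bt) * x ≠ 0)
    (hB : 2 * (1 - bt) + -(γ - 1 + 2 * bt) * x ≠ 0)
    (hC : (1 - bt) + -bt * x ≠ 0)
    (hE : 1 + 1 * x ≠ 0) :
    HasDerivAt (vdwH2 γ bt) (vdwH3 γ bt x) x :=
  (((vdw_hd_inv2 _ _ x hA).sub (vdw_hd_inv2 _ _ x hB)).add
      ((vdw_hd_inv2 _ _ x hC).const_mul γ)).sub
      ((vdw_hd_inv2 1 1 x hE).const_mul γ)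

lemma vdwH1_zero (γ bt : ℝ) (hbt : bt < 1) : vdwH1 γ bt 0 = 0 := by
  have hb : (1 : ℝ) - bt ≠ 0 := by linarith
  unfold vdwH1
  simp only [mul_zero, add_zero]
  field_simp
  ring

lemma vdwH2_zero (γ bt : ℝ) (hbt : bt < 1) : vdwH2 γ bt 0 = 0 := by
  have hb : (1 : ℝ) - bt ≠ 0 := by linarith
  unfold vdwH2
  simp only [mul_zero, add_zero]
  field_simp
  ring

lemma vdwH3_zero (γ bt : ℝ) (hbt : bt < 1) :
    vdwH3 γ bt 0 = γ * (γ ^ 2 - 1) / (2 * (1 - bt) ^ 3) := by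
  have hb : (1 : ℝ) - bt ≠ 0 := by linarith
  unfold vdwH3
  simp only [mul_zero, add_zero]
  field_simp
  ring

lemma vdwH_analyticAt (γ bt : ℝ) (hbt : bt < 1) : AnalyticAt ℝ (vdwH γ bt) 0 := by
  have hb : (0 : ℝ) < 1 - bt := by linarith
  have h2b : (0 : ℝ) < 2 * (1 - bt) := by linarith
  exact ((((vdw_analyticAt_affine_log _ _ h2b).sub
      (vdw_analyticAt_affine_log _ _ h2b)).add
      (analyticAt_const.mul (vdw_analyticAt_affine_log _ _ hb))).sub
      (analyticAt_const.mul (vdw_analyticAt_affine_log 1 1 one_pos))).sub analyticAt_const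

/-- Weak-shock entropy jump in a van der Waals gas:
`(S₁-S₀)/c_v = (γ(γ²-1)/(12(1-b̃)³))ε³ + O(ε⁴)` as `ε → 0`. -/
theorem weak_shock_entropy_expansion
    (γ bt : ℝ) (g : ℝ → ℝ)
    (hγ : 1 < γ) (hbt0 : 0 ≤ bt) (hbt1 : bt < 1)
    (hg : ∀ ε : ℝ, g ε
      = Real.log (((γ + 1 - 2 * bt) * (1 + ε) - (γ - 1))
          / ((γ + 1) - (γ - 1 + 2 * bt) * (1 + ε)))
        + γ * Real.log ((1 - bt * (1 + ε)) / ((1 + ε) * (1 - bt)))) :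
    g 0 = 0 ∧ deriv g 0 = 0 ∧ iteratedDeriv 2 g 0 = 0 ∧
      iteratedDeriv 3 g 0 / 6 = γ * (γ ^ 2 - 1) / (12 * (1 - bt) ^ 3) ∧
      (fun ε : ℝ => g ε - γ * (γ ^ 2 - 1) / (12 * (1 - bt) ^ 3) * ε ^ 3)
        =O[nhds 0] fun ε : ℝ => ε ^ 4 := by
  have hb : (0 : ℝ) < 1 - bt := by linarith
  have hγ1 : (0 : ℝ) < γ + 1 := by linarith
  set δ : ℝ := (1 - bt) / (γ + 1) with hδdef
  have hδ : 0 < δ := div_pos hb hγ1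
  set S : Set ℝ := {x : ℝ | |x| < δ} with hSdef
  have hopen : IsOpen S := isOpen_lt continuous_abs continuous_const
  have h0S : (0 : ℝ) ∈ S := by simp [hSdef, abs_of_nonneg, hδ]
  -- positivity on S
  have hpos : ∀ x ∈ S, 0 < 2 * (1 - bt) + (γ + 1 - 2 * bt) * x ∧
      0 < 2 * (1 - bt) + -(γ - 1 + 2 * bt) * x ∧
      0 < (1 - bt) + -bt * x ∧ 0 < 1 + 1 * x := by
    intro x hx
    have hx' : |x| < δ := hx
    obtain ⟨hx1, hx2⟩ := abs_lt.1 hx'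
    have hx1' : -(1 - bt) < x * (γ + 1) := by
      rw [← neg_div] at hx1
      exact (div_lt_iff₀ hγ1).1 hx1
    have hx2' : x * (γ + 1) < 1 - bt := (lt_div_iff₀ hγ1).1 hx2
    rcases le_or_gt 0 x with hx0 | hx0
    · refine ⟨by nlinarith, ?_, ?_, by linarith⟩
      · nlinarith [mul_le_mul_of_nonneg_right (show γ - 1 + 2 * bt ≤ γ + 1 by linarith) hx0]
      · nlinarith [mul_le_mul_of_nonneg_right (show bt ≤ γ + 1 by linarith) hx0]
    · refine ⟨?_, by nlinarith, by nlinarith, by nlinarith⟩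
      nlinarith [mul_le_mul_of_nonpos_right (show γ + 1 - 2 * bt ≤ γ + 1 by linarith) hx0.le]
  -- g equals vdwH on S
  have hgh : ∀ x ∈ S, g x = vdwH γ bt x := by
    intro x hx
    obtain ⟨hA, hB, hC, hE⟩ := hpos x hx
    have hE' : (0 : ℝ) < 1 + x := by linarith
    rw [hg x, vdwH]
    have e1 : (γ + 1 - 2 * bt) * (1 + x) - (γ - 1)
        = 2 * (1 - bt) + (γ + 1 - 2 * bt) * x := by ring
    have e2 : (γ + 1) - (γ - 1 + 2 * bt) * (1 + x)
        = 2 * (1 - bt) + -(γ - 1 + 2 * bt) * x := by ring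
    have e3 : 1 - bt * (1 + x) = (1 - bt) + -bt * x := by ring
    have e4 : (1 + x) = 1 + 1 * x := by ring
    rw [e1, e2, e3, e4, Real.log_div hA.ne' hB.ne',
      Real.log_div hC.ne' (mul_pos (by linarith : (0:ℝ) < 1 + 1 * x) hb).ne',
      Real.log_mul (by linarith : (0:ℝ) < 1 + 1 * x).ne' hb.ne']
    ring
  have hgEq : ∀ x ∈ S, g =ᶠ[nhds x] vdwH γ bt := fun x hx =>
    eventually_of_mem (hopen.mem_nhds hx) hgh
  -- first derivative on S
  have hd1 : ∀ x ∈ S, deriv g x = vdwH1 γ bt x := by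
    intro x hx
    obtain ⟨hA, hB, hC, hE⟩ := hpos x hx
    exact (hgEq x hx).deriv_eq.trans
      (vdwH_hasDerivAt γ bt x hA.ne' hB.ne' hC.ne' hE.ne').deriv
  have hd1Eq : ∀ x ∈ S, deriv g =ᶠ[nhds x] vdwH1 γ bt := fun x hx =>
    eventually_of_mem (hopen.mem_nhds hx) hd1
  have hd2 : ∀ x ∈ S, deriv (deriv g) x = vdwH2 γ bt x := by
    intro x hx
    obtain ⟨hA, hB, hC, hE⟩ := hpos x hx
    exact (hd1Eq x hx).deriv_eq.trans
      (vdwH1_hasDerivAt γ bt x hA.ne' hB.ne' hC.ne' hE.ne').deriv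
  have hd2Eq : ∀ x ∈ S, deriv (deriv g) =ᶠ[nhds x] vdwH2 γ bt := fun x hx =>
    eventually_of_mem (hopen.mem_nhds hx) hd2
  have hd3 : deriv (deriv (deriv g)) 0 = vdwH3 γ bt 0 := by
    obtain ⟨hA, hB, hC, hE⟩ := hpos 0 h0S
    exact (hd2Eq 0 h0S).deriv_eq.trans
      (vdwH2_hasDerivAt γ bt 0 hA.ne' hB.ne' hC.ne' hE.ne').deriv
  -- the four values
  have hg0 : g 0 = 0 := by
    rw [hgh 0 h0S, vdwH]
    simp
  have hg1 : deriv g 0 = 0 := (hd1 0 h0S).trans (vdwH1_zero γ bt hbt1)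
  have hg2 : iteratedDeriv 2 g 0 = 0 := by
    rw [show (2:ℕ) = 1 + 1 from rfl, iteratedDeriv_succ, iteratedDeriv_one]
    exact (hd2 0 h0S).trans (vdwH2_zero γ bt hbt1)
  have hg3 : iteratedDeriv 3 g 0 = γ * (γ ^ 2 - 1) / (2 * (1 - bt) ^ 3) := by
    rw [show (3:ℕ) = 2 + 1 from rfl, iteratedDeriv_succ,
      show (2:ℕ) = 1 + 1 from rfl, iteratedDeriv_succ, iteratedDeriv_one]
    exact hd3.trans (vdwH3_zero γ bt hbt1)
  have hb3 : ((1 : ℝ) - bt) ^ 3 ≠ 0 := pow_ne_zero 3 hb.ne'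
  have hKval : iteratedDeriv 3 g 0 / 6 = γ * (γ ^ 2 - 1) / (12 * (1 - bt) ^ 3) := by
    rw [hg3, div_div, show (2 * (1 - bt) ^ 3 * 6 : ℝ) = 12 * (1 - bt) ^ 3 from by ring]
  refine ⟨hg0, hg1, hg2, hKval, ?_⟩
  -- big-O part
  set K : ℝ := γ * (γ ^ 2 - 1) / (12 * (1 - bt) ^ 3) with hKdef
  have hg3' : iteratedDeriv 3 g 0 = 6 * K := by
    have h2 : (2:ℝ) * (1 - bt) ^ 3 ≠ 0 := mul_ne_zero two_ne_zero hb3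
    have h12 : (12:ℝ) * (1 - bt) ^ 3 ≠ 0 := mul_ne_zero (by norm_num) hb3
    rw [hg3, hKdef, ← mul_div_assoc, div_eq_div_iff h2 h12]
    ring
  have hga : AnalyticAt ℝ g 0 :=
    (vdwH_analyticAt γ bt hbt1).congr (hgEq 0 h0S).symm
  obtain ⟨p, hp⟩ := hga
  obtain ⟨r, hr⟩ := hp
  have hpk : ∀ (y : ℝ) (k : ℕ),
      (Nat.factorial k : ℝ) * p k (fun _ => y) = y ^ k * iteratedDeriv k g 0 := by
    intro y k
    have h1 := hr.factorial_smul y k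
    rw [iteratedFDeriv_apply_eq_iteratedDeriv_mul_prod] at h1
    simpa [nsmul_eq_mul, smul_eq_mul, Finset.prod_const] using h1
  have ck : ∀ k : ℕ, (Nat.factorial k : ℝ) * p.coeff k = iteratedDeriv k g 0 := by
    intro k
    have h2 := hpk 1 k
    rw [one_pow, one_mul] at h2
    exact h2
  have c0 : p.coeff 0 = 0 := by have := ck 0; simpa [hg0] using this
  have c1 : p.coeff 1 = 0 := by have := ck 1; simpa [iteratedDeriv_one, hg1] using this
  have c2 : p.coeff 2 = 0 := by
    have := ck 2; rw [hg2] at this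
    norm_num [Nat.factorial] at this
    linarith
  have c3 : p.coeff 3 = K := by
    have := ck 3; rw [hg3'] at this
    norm_num [Nat.factorial] at this
    linarith
  have hps : ∀ y : ℝ, p.partialSum 4 y = K * y ^ 3 := by
    intro y
    simp [FormalMultilinearSeries.partialSum, Finset.sum_range_succ, c0, c1, c2, c3]
    ring
  have hpa : HasFPowerSeriesAt g p 0 := ⟨r, hr⟩
  have hO := hpa.isBigO_sub_partialSum_pow 4
  have hO' : (fun ε : ℝ => g ε - K * ε ^ 3) =O[nhds 0] fun y : ℝ => ‖y‖ ^ 4 := by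
    refine hO.congr' ?_ EventuallyEq.rfl
    refine Eventually.of_forall fun y => ?_
    show g (0 + y) - p.partialSum 4 y = g y - K * y ^ 3
    rw [zero_add, hps y]
  refine hO'.trans (IsBigO.of_bound 1 ?_)
  refine Eventually.of_forall fun y => ?_
  simp [Real.norm_eq_abs, abs_abs, abs_pow]
end

section
/- Let α ∈ (0, π/2) and a₀ > 0, and define ζ*(θ) = a₀ tan α / (sin(θ − α) sec α + sin(2α − θ)) for θ near 2α. Then ζ*(2α) = a₀, (ζ*)′(2α) = 0, and (ζ*)″(2α) = a₀. Consequently, in the stretched coordinates r′ = (ζ*/c₀ − κ₀)/ε, θ′ = (θ − 2α)/√ε with c₀κ₀ = a₀, the straight reflected shock is asymptotically the parabola r′ = κ₀θ′²/2 as θ′ → ∞ (ε → 0). -/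
open Real Filter Asymptotics

/-- Near the singular point `θ = 2α`, the straight reflected shock
`ζ*(θ) = a₀ tan α/(sin(θ-α) sec α + sin(2α-θ))` satisfies `ζ*(2α) = a₀`,
`(ζ*)′(2α) = 0`, `(ζ*)″(2α) = a₀`; hence it is asymptotically the parabola
`ζ* ≈ a₀ + a₀(θ-2α)²/2`. -/
theorem reflected_shock_parabolic_at_singular_point
    (α a₀ : ℝ) (hα : α ∈ Set.Ioo (0 : ℝ) (π / 2)) (ha₀ : 0 < a₀)
    (ζ : ℝ → ℝ)
    (hζ : ∀ θ : ℝ, ζ θ = a₀ * Real.tan α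
      / (Real.sin (θ - α) * (1 / Real.cos α) + Real.sin (2 * α - θ))) :
    ζ (2 * α) = a₀ ∧ deriv ζ (2 * α) = 0 ∧ iteratedDeriv 2 ζ (2 * α) = a₀ ∧
      (fun θ : ℝ => ζ θ - (a₀ + a₀ * (θ - 2 * α) ^ 2 / 2))
        =o[nhds (2 * α)] fun θ : ℝ => (θ - 2 * α) ^ 2 := by
  obtain ⟨hα0, hα2⟩ := hα
  have hcosα : 0 < Real.cos α := Real.cos_pos_of_mem_Ioo ⟨by linarith [Real.pi_pos], hα2⟩
  have htan : 0 < Real.tan α := Real.tan_pos_of_pos_of_lt_pi_div_two hα0 hα2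
  -- Step 1: the defining formula simplifies to `ζ θ = a₀ / cos (θ - 2α)`.
  have hζ2 : ζ = fun θ => a₀ / Real.cos (θ - 2 * α) := by
    funext θ
    rw [hζ]
    have hden : Real.sin (θ - α) * (1 / Real.cos α) + Real.sin (2 * α - θ)
        = Real.tan α * Real.cos (θ - 2 * α) := by
      have h1 : θ - α = (θ - 2 * α) + α := by ring
      have h2 : 2 * α - θ = -(θ - 2 * α) := by ring
      rw [h1, h2, Real.sin_add, Real.sin_neg, Real.tan_eq_sin_div_cos]
      field_simp
      ring
    rw [hden, mul_comm a₀, mul_div_mul_left _ _ (ne_of_gt htan)]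
  subst hζ2
  set b := 2 * α with hb
  set ζ : ℝ → ℝ := fun θ => a₀ / Real.cos (θ - b) with hzdef
  -- basic derivative facts
  have hc : ∀ x : ℝ, HasDerivAt (fun θ : ℝ => Real.cos (θ - b)) (-Real.sin (x - b)) x := by
    intro x
    simpa using ((hasDerivAt_id x).sub_const b).cos
  have hU : ∀ᶠ x in nhds b, Real.cos (x - b) ≠ 0 := by
    have hcont : ContinuousAt (fun x : ℝ => Real.cos (x - b)) b := by fun_prop
    exact hcont.eventually_ne (by simp)
  have hG : ∀ x : ℝ, Real.cos (x - b) ≠ 0 →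
      HasDerivAt ζ (a₀ * Real.sin (x - b) / Real.cos (x - b) ^ 2) x := by
    intro x hx
    have := (hasDerivAt_const x a₀).div (hc x) hx
    refine this.congr_deriv ?_
    ring
  have hg' : ∀ x : ℝ, HasDerivAt (fun θ : ℝ => (θ - b) ^ 2) (2 * (x - b)) x := by
    intro x
    have := ((hasDerivAt_id x).sub_const b).pow 2
    refine this.congr_deriv ?_
    simp only [id_eq]
    ring
  -- value at b
  refine ⟨by simp [hzdef], ?_, ?_, ?_⟩
  -- first derivative
  · have := (hG b (by simp)).deriv
    simpa using this
  -- second derivative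
  · have hde : deriv ζ =ᶠ[nhds b]
        fun x => a₀ * Real.sin (x - b) / Real.cos (x - b) ^ 2 :=
      hU.mono fun x hx => (hG x hx).deriv
    rw [iteratedDeriv_succ, iteratedDeriv_one, hde.deriv_eq]
    have hN : HasDerivAt (fun x : ℝ => a₀ * Real.sin (x - b))
        (a₀ * Real.cos (b - b)) b := by
      have := ((hasDerivAt_id b).sub_const b).sin
      simpa using this.const_mul a₀
    have hD : HasDerivAt (fun x : ℝ => Real.cos (x - b) ^ 2)
        (2 * Real.cos (b - b) ^ 1 * (-Real.sin (b - b))) b :=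
      (hc b).pow 2
    have := (hN.div hD (by simp)).deriv
    simp at this
    exact this
  -- the little-o estimate, via l'Hôpital
  · set F : ℝ → ℝ := fun θ => ζ θ - (a₀ + a₀ * (θ - b) ^ 2 / 2) with hF
    rw [Asymptotics.isLittleO_iff_tendsto]
    swap
    · intro x hx
      have : x = b := by nlinarith [sq_nonneg (x - b)]
      simp [hF, hzdef, this]
    have hF' : ∀ x : ℝ, Real.cos (x - b) ≠ 0 →
        HasDerivAt F (a₀ * Real.sin (x - b) / Real.cos (x - b) ^ 2 - a₀ * (x - b)) x := by
      intro x hx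
      have h1 := hG x hx
      have hsq : HasDerivAt (fun θ : ℝ => (θ - b) ^ 2) (2 * (x - b)) x := hg' x
      have h2 : HasDerivAt (fun θ : ℝ => a₀ + a₀ * (θ - b) ^ 2 / 2) (a₀ * (x - b)) x := by
        have h3 := ((hsq.const_mul a₀).div_const 2).const_add a₀
        refine h3.congr_deriv ?_
        ring
      exact h1.sub h2
    -- sin u / u → 1
    have hsin : Tendsto (fun x : ℝ => Real.sin (x - b) / (x - b))
        (nhdsWithin b {b}ᶜ) (nhds 1) := by
      have h0 : Tendsto (slope Real.sin 0) (nhdsWithin (0:ℝ) {(0:ℝ)}ᶜ) (nhds 1) := by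
        have := Real.hasDerivAt_sin 0
        rw [hasDerivAt_iff_tendsto_slope] at this
        simpa using this
      have hmap : Tendsto (fun x : ℝ => x - b) (nhdsWithin b {b}ᶜ)
          (nhdsWithin (0:ℝ) {(0:ℝ)}ᶜ) := by
        apply tendsto_nhdsWithin_of_tendsto_nhds_of_eventually_within
        · have : Tendsto (fun x : ℝ => x - b) (nhds b) (nhds (b - b)) :=
            (continuous_id.sub continuous_const).tendsto b
          simpa using this.mono_left nhdsWithin_le_nhds
        · filter_upwards [self_mem_nhdsWithin] with x hx
          simpa [sub_eq_zero] using hx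
      have := h0.comp hmap
      refine this.congr fun x => ?_
      simp [slope_def_field, Function.comp]
    have hcos1 : Tendsto (fun x : ℝ => Real.cos (x - b) ^ 2)
        (nhdsWithin b {b}ᶜ) (nhds 1) := by
      have : Tendsto (fun x : ℝ => Real.cos (x - b) ^ 2) (nhds b)
          (nhds (Real.cos (b - b) ^ 2)) :=
        (((Real.continuous_cos.comp (continuous_id.sub continuous_const)).pow 2).tendsto b)
      simpa using this.mono_left nhdsWithin_le_nhds
    have hdiv : Tendsto (fun x => (a₀ * Real.sin (x - b) / Real.cos (x - b) ^ 2 - a₀ * (x - b))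
        / (2 * (x - b))) (nhdsWithin b {b}ᶜ) (nhds 0) := by
      have hT : Tendsto (fun x : ℝ => a₀ / 2 *
          (Real.sin (x - b) / (x - b) / Real.cos (x - b) ^ 2 - 1))
          (nhdsWithin b {b}ᶜ) (nhds 0) := by
        have := (((hsin.div hcos1 (by norm_num)).sub_const 1).const_mul (a₀ / 2))
        simpa using this
      apply hT.congr'
      filter_upwards [self_mem_nhdsWithin,
        eventually_nhdsWithin_of_eventually_nhds hU] with x hx hcx
      have hxb : x - b ≠ 0 := sub_ne_zero.mpr hx
      field_simp
    have hfa : Tendsto F (nhdsWithin b {b}ᶜ) (nhds 0) := by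
      have hcF : ContinuousAt F b := by
        apply ContinuousAt.sub
        · exact ContinuousAt.div (by fun_prop) (by fun_prop) (by simp)
        · fun_prop
      have h := hcF.tendsto
      have hFb : F b = 0 := by simp [hF, hzdef]
      rw [hFb] at h
      exact h.mono_left nhdsWithin_le_nhds
    have hga : Tendsto (fun θ : ℝ => (θ - b) ^ 2) (nhdsWithin b {b}ᶜ) (nhds 0) := by
      have : Tendsto (fun θ : ℝ => (θ - b) ^ 2) (nhds b) (nhds ((b - b) ^ 2)) :=
        (((continuous_id.sub continuous_const).pow 2).tendsto b)
      simpa using this.mono_left nhdsWithin_le_nhds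
    have hlh : Tendsto (fun x => F x / (x - b) ^ 2) (nhdsWithin b {b}ᶜ) (nhds 0) := by
      apply HasDerivAt.lhopital_zero_nhdsNE
      · filter_upwards [eventually_nhdsWithin_of_eventually_nhds hU] with x hx
        exact hF' x hx
      · filter_upwards with x
        exact hg' x
      · filter_upwards [self_mem_nhdsWithin] with x hx
        have : x - b ≠ 0 := sub_ne_zero.mpr hx
        exact mul_ne_zero two_ne_zero this
      · exact hfa
      · exact hga
      · exact hdiv
    rw [← nhdsNE_sup_pure b, tendsto_sup]
    refine ⟨hlh, ?_⟩
    have h := tendsto_pure_nhds (fun x => F x / (x - b) ^ 2) b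
    have hv : F b / (b - b) ^ 2 = 0 := by simp [hF, hzdef]
    rwa [hv] at h
end

section
/- Let κ₀ > 0 and define u(x, y) = arctan( sqrt(−2x/κ₀) / y ) on the region x < 0, y > 0. Then u satisfies the degenerate linear PDE 2κ₀ x u_{xx} + κ₀ u_x − u_{yy} = 0 throughout that region. -/
/-- The inner-limit linear solution `u(x,y) = arctan(√(-2x/κ₀)/y)` satisfies the
degenerate PDE `2κ₀ x u_xx + κ₀ u_x - u_yy = 0` for `x < 0`, `y > 0`. -/
theorem arctan_solution_degenerate_pde
    (κ₀ : ℝ) (hκ : 0 < κ₀) (u : ℝ → ℝ → ℝ)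
    (hu : ∀ x y : ℝ, u x y = Real.arctan (Real.sqrt (-2 * x / κ₀) / y)) :
    ∀ x : ℝ, x < 0 → ∀ y : ℝ, 0 < y →
      2 * κ₀ * x * deriv (fun a : ℝ => deriv (fun b : ℝ => u b y) a) x
        + κ₀ * deriv (fun a : ℝ => u a y) x
        - deriv (fun c : ℝ => deriv (fun d : ℝ => u x d) c) y = 0 := by
  intro x hx y hy
  -- notation
  set F : ℝ → ℝ := fun b => -y / (Real.sqrt (-2 * b / κ₀) * (κ₀ * y ^ 2 - 2 * b)) with hF
  -- first derivative in x, at any b < 0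
  have hder1 : ∀ b : ℝ, b < 0 → HasDerivAt (fun t : ℝ => u t y) (F b) b := by
    intro b hb
    have hpos : 0 < -2 * b / κ₀ := div_pos (by linarith) hκ
    set s := Real.sqrt (-2 * b / κ₀) with hsdef
    have hs : 0 < s := Real.sqrt_pos.mpr hpos
    have hs2 : s ^ 2 = -2 * b / κ₀ := Real.sq_sqrt hpos.le
    have hkey : s ^ 2 * κ₀ = -2 * b := by field_simp at hs2; linarith
    have h1 : HasDerivAt (fun t : ℝ => -2 * t / κ₀) (-2 / κ₀) b := by
      simpa using ((hasDerivAt_id b).const_mul (-2)).div_const κ₀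
    have h2 : HasDerivAt (fun t : ℝ => Real.sqrt (-2 * t / κ₀))
        (1 / (2 * s) * (-2 / κ₀)) b :=
      (Real.hasDerivAt_sqrt hpos.ne').comp b h1
    have h3 := h2.div_const y
    have h4 : HasDerivAt (fun t : ℝ => Real.arctan (Real.sqrt (-2 * t / κ₀) / y))
        (1 / (1 + (s / y) ^ 2) * (1 / (2 * s) * (-2 / κ₀) / y)) b :=
      h3.arctan
    have heq : (fun t : ℝ => u t y) = fun t : ℝ => Real.arctan (Real.sqrt (-2 * t / κ₀) / y) :=
      funext fun t => hu t y
    rw [heq]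
    convert h4 using 1
    have hD : 0 < κ₀ * y ^ 2 - 2 * b := by nlinarith
    show -y / (s * (κ₀ * y ^ 2 - 2 * b)) = 1 / (1 + (s / y) ^ 2) * (1 / (2 * s) * (-2 / κ₀) / y)
    clear_value s
    field_simp
    rw [neg_inj, div_eq_one_iff_eq (by linarith)]; linear_combination hkey
  -- second derivative in x at x
  have hpos : 0 < -2 * x / κ₀ := div_pos (by linarith) hκ
  set s := Real.sqrt (-2 * x / κ₀) with hsdef
  have hs : 0 < s := Real.sqrt_pos.mpr hpos
  have hs2 : s ^ 2 = -2 * x / κ₀ := Real.sq_sqrt hpos.le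
  have hkey : s ^ 2 * κ₀ = -2 * x := by field_simp at hs2; linarith
  have hD : 0 < κ₀ * y ^ 2 - 2 * x := by nlinarith
  have h1 : HasDerivAt (fun t : ℝ => -2 * t / κ₀) (-2 / κ₀) x := by
    simpa using ((hasDerivAt_id x).const_mul (-2)).div_const κ₀
  have h2 : HasDerivAt (fun t : ℝ => Real.sqrt (-2 * t / κ₀))
      (1 / (2 * s) * (-2 / κ₀)) x :=
    (Real.hasDerivAt_sqrt hpos.ne').comp x h1
  have hDd : HasDerivAt (fun t : ℝ => κ₀ * y ^ 2 - 2 * t) (-2) x := by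
    simpa using ((hasDerivAt_id x).const_mul 2).const_sub (κ₀ * y ^ 2)
  have hg : HasDerivAt (fun t : ℝ => Real.sqrt (-2 * t / κ₀) * (κ₀ * y ^ 2 - 2 * t))
      (1 / (2 * s) * (-2 / κ₀) * (κ₀ * y ^ 2 - 2 * x) + s * (-2)) x := h2.mul hDd
  have hgne : s * (κ₀ * y ^ 2 - 2 * x) ≠ 0 := by positivity
  have hFder : HasDerivAt F
      ((0 * (s * (κ₀ * y ^ 2 - 2 * x)) -
        (-y) * (1 / (2 * s) * (-2 / κ₀) * (κ₀ * y ^ 2 - 2 * x) + s * (-2))) /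
        (s * (κ₀ * y ^ 2 - 2 * x)) ^ 2) x :=
    (hasDerivAt_const x (-y)).div hg hgne
  have e1 : deriv (fun a : ℝ => deriv (fun b : ℝ => u b y) a) x
      = (0 * (s * (κ₀ * y ^ 2 - 2 * x)) -
        (-y) * (1 / (2 * s) * (-2 / κ₀) * (κ₀ * y ^ 2 - 2 * x) + s * (-2))) /
        (s * (κ₀ * y ^ 2 - 2 * x)) ^ 2 := by
    have hev : (fun a : ℝ => deriv (fun b : ℝ => u b y) a) =ᶠ[nhds x] F := by
      filter_upwards [Iio_mem_nhds hx] with b hb using (hder1 b hb).deriv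
    rw [hev.deriv_eq, hFder.deriv]
  -- first derivative value at x
  have e2 : deriv (fun a : ℝ => u a y) x = -y / (s * (κ₀ * y ^ 2 - 2 * x)) :=
    (hder1 x hx).deriv
  -- derivative in y, at any d > 0
  have hder2 : ∀ d : ℝ, 0 < d → HasDerivAt (fun t : ℝ => u x t)
      (-(s * κ₀) / (κ₀ * d ^ 2 - 2 * x)) d := by
    intro d hd
    have h5 : HasDerivAt (fun t : ℝ => s / t) ((0 * d - s * 1) / d ^ 2) d :=
      (hasDerivAt_const d s).div (hasDerivAt_id d) hd.ne'
    have h6 : HasDerivAt (fun t : ℝ => Real.arctan (s / t))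
        (1 / (1 + (s / d) ^ 2) * ((0 * d - s * 1) / d ^ 2)) d :=
      (Real.hasDerivAt_arctan (s / d)).comp d h5
    have heq : (fun t : ℝ => u x t) = fun t : ℝ => Real.arctan (s / t) :=
      funext fun t => by rw [hu x t, hsdef]
    rw [heq]
    convert h6 using 1
    have hDd2 : 0 < κ₀ * d ^ 2 - 2 * x := by nlinarith
    clear_value s
    field_simp
    linear_combination (-s) * hkey
  -- second derivative in y at y
  have hGden : HasDerivAt (fun t : ℝ => κ₀ * t ^ 2 - 2 * x) (κ₀ * (2 * y)) y := by
    simpa using (((hasDerivAt_pow 2 y).const_mul κ₀).sub_const (2 * x))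
  have hGder : HasDerivAt (fun t : ℝ => -(s * κ₀) / (κ₀ * t ^ 2 - 2 * x))
      ((0 * (κ₀ * y ^ 2 - 2 * x) - -(s * κ₀) * (κ₀ * (2 * y))) / (κ₀ * y ^ 2 - 2 * x) ^ 2) y :=
    (hasDerivAt_const y (-(s * κ₀))).div hGden hD.ne'
  have e3 : deriv (fun c : ℝ => deriv (fun d : ℝ => u x d) c) y
      = (0 * (κ₀ * y ^ 2 - 2 * x) - -(s * κ₀) * (κ₀ * (2 * y))) / (κ₀ * y ^ 2 - 2 * x) ^ 2 := by
    have hev : (fun c : ℝ => deriv (fun d : ℝ => u x d) c)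
        =ᶠ[nhds y] fun t : ℝ => -(s * κ₀) / (κ₀ * t ^ 2 - 2 * x) := by
      filter_upwards [Ioi_mem_nhds hy] with d hd using (hder2 d hd).deriv
    rw [hev.deriv_eq, hGder.deriv]
  rw [e1, e2, e3]
  have hsne : s ≠ 0 := hs.ne'
  have hDne : κ₀ * y ^ 2 - 2 * x ≠ 0 := hD.ne'
  clear_value s
  field_simp
  linear_combination (-κ₀ * y ^ 3 + 2 * y * (x - κ₀ * s ^ 2)) * hkey
end

section
/- Let κ₀ > 0 and let ρ, U, V : (0, ∞) × ℝ → ℝ be twice continuously differentiable functions of (ξ, θ) satisfying the first-order linearized system: (i) −ξ² ρ_ξ + κ₀ ξ U_ξ + κ₀(U + V_θ) = 0, (ii) κ₀ ρ_ξ − ξ U_ξ = 0, (iii) −ξ² V_ξ + κ₀ ρ_θ = 0. Then ρ satisfies the second-order degenerate wave equation ξ² ((1 − (ξ/κ₀)²) ρ_ξ)_ξ + ρ_{θθ} + ξ ρ_ξ = 0. -/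
open Filter Topology

private lemma line_fst_hasDerivAt (F : ℝ × ℝ → ℝ) (a b : ℝ)
    (h : DifferentiableAt ℝ (fderiv ℝ F) (a, b)) (v : ℝ × ℝ) :
    HasDerivAt (fun x => fderiv ℝ F (x, b) v)
      (fderiv ℝ (fderiv ℝ F) (a, b) ((1 : ℝ), (0 : ℝ)) v) a := by
  have hline : HasDerivAt (fun x : ℝ => ((x : ℝ), b)) ((1 : ℝ), (0 : ℝ)) a :=
    (hasDerivAt_id a).prodMk (hasDerivAt_const a b)
  have h1 : HasDerivAt (fun x : ℝ => fderiv ℝ F (x, b))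
      (fderiv ℝ (fderiv ℝ F) (a, b) ((1 : ℝ), (0 : ℝ))) a :=
    h.hasFDerivAt.comp_hasDerivAt a hline
  simpa using h1.clm_apply (hasDerivAt_const a v)

private lemma line_snd_hasDerivAt (F : ℝ × ℝ → ℝ) (a b : ℝ)
    (h : DifferentiableAt ℝ (fderiv ℝ F) (a, b)) (v : ℝ × ℝ) :
    HasDerivAt (fun y => fderiv ℝ F (a, y) v)
      (fderiv ℝ (fderiv ℝ F) (a, b) ((0 : ℝ), (1 : ℝ)) v) b := by
  have hline : HasDerivAt (fun y : ℝ => (a, (y : ℝ))) ((0 : ℝ), (1 : ℝ)) b :=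
    (hasDerivAt_const b a).prodMk (hasDerivAt_id b)
  have h1 : HasDerivAt (fun y : ℝ => fderiv ℝ F (a, y))
      (fderiv ℝ (fderiv ℝ F) (a, b) ((0 : ℝ), (1 : ℝ))) b :=
    h.hasFDerivAt.comp_hasDerivAt b hline
  simpa using h1.clm_apply (hasDerivAt_const b v)

private lemma second_partials (f : ℝ → ℝ → ℝ) (a b : ℝ)
    (hf : ContDiffAt ℝ 2 (fun p : ℝ × ℝ => f p.1 p.2) (a, b)) :
    ∃ c11 c c22 : ℝ,
      HasDerivAt (fun x => deriv (fun x' => f x' b) x) c11 a ∧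
      HasDerivAt (fun x => deriv (fun y => f x y) b) c a ∧
      HasDerivAt (fun y => deriv (fun x => f x y) a) c b ∧
      HasDerivAt (fun y => deriv (fun y' => f a y') y) c22 b := by
  set F : ℝ × ℝ → ℝ := fun p => f p.1 p.2 with hFdef
  have hd : ∀ᶠ p in 𝓝 (a, b), DifferentiableAt ℝ F p := by
    filter_upwards [hf.eventually (by norm_num)] with p hp
    exact hp.differentiableAt two_ne_zero
  have hF'd : DifferentiableAt ℝ (fderiv ℝ F) (a, b) :=
    (hf.fderiv_right (m := 1) le_rfl).differentiableAt one_ne_zero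
  set F'' := fderiv ℝ (fderiv ℝ F) (a, b) with hF''def
  have hsym : ∀ v w : ℝ × ℝ, F'' v w = F'' w v := fun v w =>
    second_derivative_symmetric_of_eventually
      (hd.mono fun p hp => hp.hasFDerivAt) hF'd.hasFDerivAt v w
  have htx : Tendsto (fun x : ℝ => (x, b)) (𝓝 a) (𝓝 (a, b)) :=
    (continuous_id.prodMk continuous_const).tendsto a
  have hty : Tendsto (fun y : ℝ => (a, y)) (𝓝 b) (𝓝 (a, b)) :=
    (continuous_const.prodMk continuous_id).tendsto b
  have e1 : (fun x => deriv (fun x' => f x' b) x)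
      =ᶠ[𝓝 a] fun x => fderiv ℝ F (x, b) ((1 : ℝ), (0 : ℝ)) := by
    filter_upwards [htx.eventually hd] with x hx
    have hline : HasDerivAt (fun x' : ℝ => ((x' : ℝ), b)) ((1 : ℝ), (0 : ℝ)) x :=
      (hasDerivAt_id x).prodMk (hasDerivAt_const x b)
    exact (hx.hasFDerivAt.comp_hasDerivAt x hline).deriv
  have e2 : (fun x => deriv (fun y => f x y) b)
      =ᶠ[𝓝 a] fun x => fderiv ℝ F (x, b) ((0 : ℝ), (1 : ℝ)) := by
    filter_upwards [htx.eventually hd] with x hx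
    have hline : HasDerivAt (fun y : ℝ => (x, (y : ℝ))) ((0 : ℝ), (1 : ℝ)) b :=
      (hasDerivAt_const b x).prodMk (hasDerivAt_id b)
    exact (hx.hasFDerivAt.comp_hasDerivAt b hline).deriv
  have e3 : (fun y => deriv (fun x => f x y) a)
      =ᶠ[𝓝 b] fun y => fderiv ℝ F (a, y) ((1 : ℝ), (0 : ℝ)) := by
    filter_upwards [hty.eventually hd] with y hy
    have hline : HasDerivAt (fun x : ℝ => ((x : ℝ), y)) ((1 : ℝ), (0 : ℝ)) a :=
      (hasDerivAt_id a).prodMk (hasDerivAt_const a y)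
    exact (hy.hasFDerivAt.comp_hasDerivAt a hline).deriv
  have e4 : (fun y => deriv (fun y' => f a y') y)
      =ᶠ[𝓝 b] fun y => fderiv ℝ F (a, y) ((0 : ℝ), (1 : ℝ)) := by
    filter_upwards [hty.eventually hd] with y hy
    have hline : HasDerivAt (fun y' : ℝ => (a, (y' : ℝ))) ((0 : ℝ), (1 : ℝ)) y :=
      (hasDerivAt_const y a).prodMk (hasDerivAt_id y)
    exact (hy.hasFDerivAt.comp_hasDerivAt y hline).deriv
  refine ⟨F'' (1, 0) (1, 0), F'' (1, 0) (0, 1), F'' (0, 1) (0, 1), ?_, ?_, ?_, ?_⟩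
  · exact (line_fst_hasDerivAt F a b hF'd _).congr_of_eventuallyEq e1
  · exact (line_fst_hasDerivAt F a b hF'd _).congr_of_eventuallyEq e2
  · have := (line_snd_hasDerivAt F a b hF'd ((1 : ℝ), (0 : ℝ))).congr_of_eventuallyEq e3
    rwa [hsym (0, 1) (1, 0)] at this
  · exact (line_snd_hasDerivAt F a b hF'd _).congr_of_eventuallyEq e4

/-- The first-order linearized self-similar Euler system implies the
second-order degenerate wave equation
`ξ²((1-(ξ/κ₀)²)ρ_ξ)_ξ + ρ_θθ + ξρ_ξ = 0` for the density perturbation. -/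
theorem linearized_system_implies_degenerate_wave_equation
    (κ₀ : ℝ) (hκ : 0 < κ₀) (ρ U V : ℝ → ℝ → ℝ)
    (hρ : ContDiffOn ℝ 2 (fun p : ℝ × ℝ => ρ p.1 p.2) (Set.Ioi (0 : ℝ) ×ˢ Set.univ))
    (hU : ContDiffOn ℝ 2 (fun p : ℝ × ℝ => U p.1 p.2) (Set.Ioi (0 : ℝ) ×ˢ Set.univ))
    (hV : ContDiffOn ℝ 2 (fun p : ℝ × ℝ => V p.1 p.2) (Set.Ioi (0 : ℝ) ×ˢ Set.univ))
    (h1 : ∀ ξ : ℝ, 0 < ξ → ∀ θ : ℝ,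
      -ξ ^ 2 * deriv (fun x => ρ x θ) ξ + κ₀ * ξ * deriv (fun x => U x θ) ξ
        + κ₀ * (U ξ θ + deriv (fun y => V ξ y) θ) = 0)
    (h2 : ∀ ξ : ℝ, 0 < ξ → ∀ θ : ℝ,
      κ₀ * deriv (fun x => ρ x θ) ξ - ξ * deriv (fun x => U x θ) ξ = 0)
    (h3 : ∀ ξ : ℝ, 0 < ξ → ∀ θ : ℝ,
      -ξ ^ 2 * deriv (fun x => V x θ) ξ + κ₀ * deriv (fun y => ρ ξ y) θ = 0) :
    ∀ ξ : ℝ, 0 < ξ → ∀ θ : ℝ,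
      ξ ^ 2 * deriv (fun x => (1 - (x / κ₀) ^ 2) * deriv (fun x' => ρ x' θ) x) ξ
        + deriv (fun y => deriv (fun y' => ρ ξ y') y) θ
        + ξ * deriv (fun x => ρ x θ) ξ = 0 := by
  intro ξ hξ θ
  have hξ0 : ξ ≠ 0 := ne_of_gt hξ
  have hκ0 : κ₀ ≠ 0 := ne_of_gt hκ
  have hsopen : IsOpen (Set.Ioi (0 : ℝ) ×ˢ (Set.univ : Set ℝ)) :=
    isOpen_Ioi.prod isOpen_univ
  have hmem : ((ξ, θ) : ℝ × ℝ) ∈ Set.Ioi (0 : ℝ) ×ˢ (Set.univ : Set ℝ) := ⟨hξ, trivial⟩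
  have hρat : ContDiffAt ℝ 2 (fun p : ℝ × ℝ => ρ p.1 p.2) (ξ, θ) :=
    hρ.contDiffAt (hsopen.mem_nhds hmem)
  have hUat : ContDiffAt ℝ 2 (fun p : ℝ × ℝ => U p.1 p.2) (ξ, θ) :=
    hU.contDiffAt (hsopen.mem_nhds hmem)
  have hVat : ContDiffAt ℝ 2 (fun p : ℝ × ℝ => V p.1 p.2) (ξ, θ) :=
    hV.contDiffAt (hsopen.mem_nhds hmem)
  obtain ⟨ρxx, cρ, ρθθ, hρxx, -, -, hρθθ'⟩ := second_partials ρ ξ θ hρat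
  obtain ⟨-, cV, -, -, hVc1, hVc2, -⟩ := second_partials V ξ θ hVat
  set ρx := deriv (fun x => ρ x θ) ξ with hρxdef
  -- identify cV
  have hfun : (fun y => deriv (fun x => V x y) ξ)
      = fun y => κ₀ * deriv (fun y' => ρ ξ y') y / ξ ^ 2 := by
    funext y
    have h := h3 ξ hξ y
    field_simp
    linarith
  rw [hfun] at hVc2
  have halt : HasDerivAt (fun y => κ₀ * deriv (fun y' => ρ ξ y') y / ξ ^ 2)
      (κ₀ * ρθθ / ξ ^ 2) θ := (hρθθ'.const_mul κ₀).div_const (ξ ^ 2)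
  have hcV : cV = κ₀ * ρθθ / ξ ^ 2 := hVc2.unique halt
  -- U partial derivative
  have hUd : HasDerivAt (fun x => U x θ) (deriv (fun x => U x θ) ξ) ξ := by
    have hdU : DifferentiableAt ℝ (fun p : ℝ × ℝ => U p.1 p.2) (ξ, θ) :=
      hUat.differentiableAt two_ne_zero
    have : DifferentiableAt ℝ (fun x => U x θ) ξ :=
      by have := hdU.comp ξ (differentiableAt_id.prodMk (differentiableAt_const θ) :
        DifferentiableAt ℝ (fun x : ℝ => (x, θ)) ξ); exact this
    exact this.hasDerivAt
  set Uξ := deriv (fun x => U x θ) ξ with hUξdef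
  -- differentiate the reduced first-order relation
  have hcoef : HasDerivAt (fun x : ℝ => κ₀ ^ 2 - x ^ 2) (-(2 * ξ)) ξ := by
    simpa using (hasDerivAt_pow 2 ξ).const_sub (κ₀ ^ 2)
  have hL : HasDerivAt
      (fun x => (κ₀ ^ 2 - x ^ 2) * deriv (fun x' => ρ x' θ) x + κ₀ * U x θ)
      (-(2 * ξ) * ρx + (κ₀ ^ 2 - ξ ^ 2) * ρxx + κ₀ * Uξ) ξ :=
    (hcoef.mul hρxx).add (hUd.const_mul κ₀)
  have hR : HasDerivAt (fun x => -κ₀ * deriv (fun y => V x y) θ) (-κ₀ * cV) ξ :=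
    hVc1.const_mul (-κ₀)
  have heq : (fun x => (κ₀ ^ 2 - x ^ 2) * deriv (fun x' => ρ x' θ) x + κ₀ * U x θ)
      =ᶠ[𝓝 ξ] fun x => -κ₀ * deriv (fun y => V x y) θ := by
    filter_upwards [Ioi_mem_nhds hξ] with x hx
    have e1 := h1 x hx θ
    have e2 := h2 x hx θ
    linear_combination e1 + κ₀ * e2
  have hL' : HasDerivAt
      (fun x => (κ₀ ^ 2 - x ^ 2) * deriv (fun x' => ρ x' θ) x + κ₀ * U x θ)
      (-κ₀ * cV) ξ := hR.congr_of_eventuallyEq heq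
  have hkey : -(2 * ξ) * ρx + (κ₀ ^ 2 - ξ ^ 2) * ρxx + κ₀ * Uξ = -κ₀ * cV :=
    hL.unique hL'
  rw [hcV] at hkey
  have h2' := h2 ξ hξ θ
  rw [← hρxdef, ← hUξdef] at h2'
  -- compute the goal derivative
  have hc : HasDerivAt (fun x : ℝ => 1 - (x / κ₀) ^ 2) (-(2 * ξ) / κ₀ ^ 2) ξ := by
    have h0 : HasDerivAt (fun x : ℝ => x / κ₀) (1 / κ₀) ξ := by
      simpa using (hasDerivAt_id ξ).div_const κ₀
    have h1' := (h0.pow 2).const_sub 1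
    refine h1'.congr_deriv ?_
    norm_num
    field_simp
  have hg1 : HasDerivAt (fun x => (1 - (x / κ₀) ^ 2) * deriv (fun x' => ρ x' θ) x)
      (-(2 * ξ) / κ₀ ^ 2 * ρx + (1 - (ξ / κ₀) ^ 2) * ρxx) ξ := hc.mul hρxx
  rw [hg1.deriv, hρθθ'.deriv]
  field_simp at hkey ⊢
  linear_combination hkey + ξ * κ₀ * h2'
end

section
/- Let k < 0 and R > 0, and define g(r) = r^{−1/2} ( k r^{1/2} + sqrt(R − r + k² r) ) for r ∈ (0, R]. Then g(R) = 0 and the left-hand derivative of g at r = R equals 1/(2kR). Consequently, for the rarefaction-wave density profile ρ(r) = ρ₂ + ε² C ρ₀ g(r) with C < 0 and k = εC(γ+1)/(2(1−b̃)) matched continuously to ρ ≡ ρ₂ for r > R, the jump in the radial density gradient across the diffracted wavefront r = R is [ρ_r] = ε ρ₀ (1 − b̃)/((γ+1)R). -/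
/-- Behaviour of the rarefaction profile `g(r) = r^{-1/2}(k r^{1/2} + √(R-r+k²r))`
at the diffracted wavefront `r = R`: `g(R) = 0`, the left derivative of `g` at `R`
is `1/(2kR)`, and the density `ρ = ρ₂ + ε²Cρ₀ g` has radial-gradient jump
`[ρ_r] = ερ₀(1-b̃)/((γ+1)R)` across `r = R`. -/
theorem rarefaction_gradient_jump
    (k R ε C γ bt ρ₀ ρ₂ : ℝ)
    (hk : k < 0) (hR : 0 < R) (hγ : 1 < γ) (hbt0 : 0 ≤ bt) (hbt1 : bt < 1)
    (hε : 0 < ε) (hC : C < 0)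
    (hkdef : k = ε * C * (γ + 1) / (2 * (1 - bt)))
    (g : ℝ → ℝ)
    (hg : ∀ r : ℝ, g r = (Real.sqrt r)⁻¹
      * (k * Real.sqrt r + Real.sqrt (R - r + k ^ 2 * r))) :
    g R = 0 ∧
    HasDerivWithinAt g (1 / (2 * k * R)) (Set.Iio R) R ∧
    HasDerivWithinAt (fun r => ρ₂ + ε ^ 2 * C * ρ₀ * g r)
      (ε * ρ₀ * (1 - bt) / ((γ + 1) * R)) (Set.Iio R) R := by
  have hkne : k ≠ 0 := ne_of_lt hk
  have hRne : R ≠ 0 := ne_of_gt hR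
  have hsR : Real.sqrt R ≠ 0 := Real.sqrt_ne_zero'.2 hR
  have hsRpos : 0 < Real.sqrt R := Real.sqrt_pos.2 hR
  have hsqR : Real.sqrt R * Real.sqrt R = R := Real.mul_self_sqrt hR.le
  have hkk : Real.sqrt (k ^ 2 * R) = -k * Real.sqrt R := by
    rw [Real.sqrt_mul (sq_nonneg k), Real.sqrt_sq_eq_abs, abs_of_neg hk]
  have huR : R - R + k ^ 2 * R = k ^ 2 * R := by ring
  have hgR : g R = 0 := by
    rw [hg R, huR, hkk]; ring
  have hderiv : HasDerivWithinAt g (1 / (2 * k * R)) (Set.Iio R) R := by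
    have h1 : HasDerivAt Real.sqrt (1 / (2 * Real.sqrt R)) R :=
      Real.hasDerivAt_sqrt hRne
    have hu : HasDerivAt (fun r : ℝ => R - r + k ^ 2 * r) (-1 + k ^ 2) R := by
      have := ((hasDerivAt_id R).const_sub R).add
        ((hasDerivAt_id R).const_mul (k ^ 2))
      simpa only [id_eq, mul_one, Pi.add_def] using this
    have huRne : R - R + k ^ 2 * R ≠ 0 := by
      rw [huR]; positivity
    have h2 : HasDerivAt (fun r : ℝ => Real.sqrt (R - r + k ^ 2 * r))
        ((-1 + k ^ 2) / (2 * Real.sqrt (R - R + k ^ 2 * R))) R := by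
      simpa [div_eq_mul_inv, mul_comm] using hu.sqrt huRne
    have h3 : HasDerivAt (fun r : ℝ =>
        (Real.sqrt r)⁻¹ * (k * Real.sqrt r + Real.sqrt (R - r + k ^ 2 * r)))
        (-(1 / (2 * Real.sqrt R)) / (Real.sqrt R) ^ 2
          * (k * Real.sqrt R + Real.sqrt (R - R + k ^ 2 * R))
        + (Real.sqrt R)⁻¹ * (k * (1 / (2 * Real.sqrt R))
          + (-1 + k ^ 2) / (2 * Real.sqrt (R - R + k ^ 2 * R)))) R :=
      (h1.inv hsR).mul ((h1.const_mul k).add h2)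
    have hEq : (fun r : ℝ =>
        (Real.sqrt r)⁻¹ * (k * Real.sqrt r + Real.sqrt (R - r + k ^ 2 * r))) = g := by
      funext r; rw [hg r]
    have hval : -(1 / (2 * Real.sqrt R)) / (Real.sqrt R) ^ 2
          * (k * Real.sqrt R + Real.sqrt (R - R + k ^ 2 * R))
        + (Real.sqrt R)⁻¹ * (k * (1 / (2 * Real.sqrt R))
          + (-1 + k ^ 2) / (2 * Real.sqrt (R - R + k ^ 2 * R)))
        = 1 / (2 * k * R) := by
      rw [huR, hkk]
      field_simp
      linear_combination (-1) * hsqR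
    rw [hEq, hval] at h3
    exact h3.hasDerivWithinAt
  refine ⟨hgR, hderiv, ?_⟩
  have h4 := (hderiv.const_mul (ε ^ 2 * C * ρ₀)).const_add ρ₂
  have hbne : (1 : ℝ) - bt ≠ 0 := by linarith
  have hγne : γ + 1 ≠ 0 := by linarith
  have hval2 : ε ^ 2 * C * ρ₀ * (1 / (2 * k * R))
      = ε * ρ₀ * (1 - bt) / ((γ + 1) * R) := by
    have hεne : ε ≠ 0 := ne_of_gt hε
    have hCne : C ≠ 0 := ne_of_lt hC
    rw [hkdef]
    field_simp
  rw [hval2] at h4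
  exact h4
end

section
/- Let κ₀ > 0, γ > 1, 0 ≤ b̃ < 1, and ϑ = (κ₀/2)(γ+1)/(1−b̃). Then the function U(r′, θ′) = θ′ · sqrt(r′), defined for r′ > 0, satisfies the mixed-type quasilinear PDE U_{θ′θ′} + 2κ₀(ϑU − r′)U_{r′r′} + 2κ₀ϑ(U_{r′})² − κ₀U_{r′} = 0 at every point with r′ > 0. Equivalently, the similarity ansatz U = θ′² f(r′/θ′²) with f(x) = √x yields an exact solution of the PDE. -/
/-- The similarity function `U(r',θ') = θ'·√r'` is an exact solution of the
mixed-type quasilinear PDE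
`U_θ'θ' + 2κ₀(ϑU - r')U_r'r' + 2κ₀ϑ(U_r')² - κ₀U_r' = 0` for `r' > 0`. -/
theorem similarity_solution_mixed_type_pde
    (κ₀ γ bt ϑ : ℝ)
    (hκ : 0 < κ₀) (hγ : 1 < γ) (hbt0 : 0 ≤ bt) (hbt1 : bt < 1)
    (hϑ : ϑ = (κ₀ / 2) * (γ + 1) / (1 - bt))
    (U : ℝ → ℝ → ℝ) (hU : ∀ r θ : ℝ, U r θ = θ * Real.sqrt r) :
    ∀ r' : ℝ, 0 < r' → ∀ θ' : ℝ,
      deriv (fun y => deriv (fun y' => U r' y') y) θ'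
        + 2 * κ₀ * (ϑ * U r' θ' - r')
          * deriv (fun x => deriv (fun x' => U x' θ') x) r'
        + 2 * κ₀ * ϑ * (deriv (fun x => U x θ') r') ^ 2
        - κ₀ * deriv (fun x => U x θ') r' = 0 := by
  intro r' hr θ'
  have hsne : Real.sqrt r' ≠ 0 := by positivity
  have hs : (Real.sqrt r') ^ 2 = r' := Real.sq_sqrt hr.le
  -- first r-derivative as a pointwise fact for all x > 0
  have hUr : ∀ θ : ℝ, ∀ x : ℝ, 0 < x →
      HasDerivAt (fun t => U t θ) (θ * (1 / (2 * Real.sqrt x))) x := by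
    intro θ x hx
    have := (Real.hasDerivAt_sqrt hx.ne').const_mul θ
    refine this.congr_of_eventuallyEq ?_
    filter_upwards with t using (hU t θ)
  -- U_θθ = 0
  have hθθ : deriv (fun y => deriv (fun y' => U r' y') y) θ' = 0 := by
    have : (fun y => deriv (fun y' => U r' y') y) = fun _ => Real.sqrt r' := by
      funext y
      have h : HasDerivAt (fun y' => U r' y') (Real.sqrt r') y := by
        have := (hasDerivAt_id y).mul_const (Real.sqrt r')
        simpa [hU] using this
      simpa using h.deriv
    rw [this]; simp
  -- U_r at r'
  have hUr' : deriv (fun x => U x θ') r' = θ' * (1 / (2 * Real.sqrt r')) :=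
    (hUr θ' r' hr).deriv
  -- U_rr at r'
  have hUrr : deriv (fun x => deriv (fun x' => U x' θ') x) r'
      = -(θ' / (4 * Real.sqrt r' ^ 3)) := by
    have hev : (fun x => deriv (fun x' => U x' θ') x)
        =ᶠ[nhds r'] (fun x => θ' / 2 * (Real.sqrt x)⁻¹) := by
      filter_upwards [Ioi_mem_nhds hr] with x hx
      have := (hUr θ' x hx).deriv
      rw [this]; ring
    rw [hev.deriv_eq]
    have hinv : HasDerivAt (fun x => (Real.sqrt x)⁻¹)
        (-(1 / (2 * Real.sqrt r')) / (Real.sqrt r') ^ 2) r' :=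
      (Real.hasDerivAt_sqrt hr.ne').inv hsne
    have := (hinv.const_mul (θ' / 2)).deriv
    rw [this]
    field_simp
    ring
  rw [hθθ, hUr', hUrr, hU]
  have h3 : Real.sqrt r' ^ 3 = r' * Real.sqrt r' := by
    rw [pow_succ, hs]
  rw [h3]
  field_simp
  linear_combination (-4 * κ₀ * ϑ * θ' ^ 2) * hs
end
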